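/- arXiv:2102.10173 — 2 statements merged into one kernel-verified Lean document; each statement's English description precedes it below -/
import Mathlib

section
/- Let α and β be distinct points of ℝ∞ = ℝ ∪ {∞} that are not a pair of adjacent vertices of the Farey graph. Then there exist adjacent vertices u, v of the Farey graph, with u, v ∉ {α, β}, such that α and β lie in different connected components of ℝ∞ ∖ {u, v} (where ℝ∞ is topologized as the one-point compactification of ℝ, a circle). -/
open Filter Topology OnePoint

/-- The Möbius map `z ↦ b - 1/z` on the one-point compactification `ℝ∞` of `ℝ`. -/
noncomputable def mob (b : ℤ) (z : OnePoint ℝ) : OnePoint ℝ :=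
  Option.elim z ((b : ℝ) : OnePoint ℝ)
    (fun x => if x = 0 then (∞ : OnePoint ℝ) else (((b : ℝ) - 1 / x : ℝ) : OnePoint ℝ))

/-- Value of a finite continued fraction `[b₀, …, b_m]`, i.e. `s₀(s₁(⋯ s_m(∞)))`. -/
noncomputable def cfVal : List ℤ → OnePoint ℝ
  | [] => ∞
  | b :: t => mob b (cfVal t)

/-- The `n`th convergent `v_n = S_n(∞)` of the continued fraction `[b₀, b₁, …]`. -/
noncomputable def cfConv (b : ℕ → ℤ) (n : ℕ) : OnePoint ℝ :=
  cfVal ((List.range (n + 1)).map b)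

/-- `m` is a positive index at which the coefficient is `0`, `1` or `-1`. -/
def badIdx (b : ℕ → ℤ) (m : ℕ) : Prop :=
  1 ≤ m ∧ (b m = 0 ∨ b m = 1 ∨ b m = -1)

instance (b : ℕ → ℤ) : DecidablePred (badIdx b) := fun m => by
  unfold badIdx; infer_instance

-- The singularization map `Φ` on integer sequences.
open Classical in
noncomputable def Phi (b : ℕ → ℤ) : ℕ → ℤ :=
  if h : ∃ m, badIdx b m then
    let m := Nat.find h
    if b m = 0 then
      fun k => if k + 1 < m then b k
        else if k = m - 1 then b (m - 1) + b (m + 1)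
        else b (k + 2)
    else if b m = 1 then
      fun k => if k + 1 < m then b k
        else if k = m - 1 then b (m - 1) - 1
        else if k = m then b (m + 1) - 1
        else b (k + 1)
    else
      fun k => if k + 1 < m then b k
        else if k = m - 1 then b (m - 1) + 1
        else if k = m then b (m + 1) + 1
        else b (k + 1)
  else b

-- `p(b) ∈ ℕ ∪ {∞}`: the least positive index at which `0`, `1` or `-1` occurs.
open Classical in
noncomputable def pIdx (b : ℕ → ℤ) : ℕ∞ :=
  if h : ∃ m, badIdx b m then (Nat.find h : ℕ∞) else ⊤

/-- `p⁽ⁿ⁾ → ∞` as `n → ∞`. -/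
def PTendsToTop (b : ℕ → ℤ) : Prop :=
  ∀ N : ℕ, ∃ M : ℕ, ∀ n ≥ M, (N : ℕ∞) < pIdx (Phi^[n] b)

/-- `p = liminf pⁿ`, as a natural number (junk value if the liminf is `∞`). -/
noncomputable def pLim (b : ℕ → ℤ) : ℕ :=
  (Filter.liminf (fun n => pIdx (Phi^[n] b)) Filter.atTop).toNat

/-- `q⁽ⁿ⁾ = |b⁽ⁿ⁾_{p-1}|`. -/
noncomputable def qSeq (b : ℕ → ℤ) (n : ℕ) : ℕ :=
  ((Phi^[n] b) (pLim b - 1)).natAbs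

/-- Two continued fractions have the same tail. -/
def SameTail (b c : ℕ → ℤ) : Prop := ∃ r s : ℕ, ∀ k : ℕ, b (r + k) = c (s + k)

/-- `bstar` is the limit continued fraction: each coefficient of `Φⁿ(b)` stabilises on it. -/
def EventuallyCoeff (b bstar : ℕ → ℤ) : Prop :=
  ∀ k : ℕ, ∃ N : ℕ, ∀ n ≥ N, Phi^[n] b k = bstar k

/-- The point of `ℝ∞` represented by the integer fraction `a/b` (`∞` when `b = 0`). -/
noncomputable def intPt (a b : ℤ) : OnePoint ℝ :=
  if b = 0 then ∞ else (((a : ℝ) / (b : ℝ)) : OnePoint ℝ)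

/-- Adjacency in the Farey graph: `x = a/b`, `y = c/d` with `ad - bc = ±1`. -/
def FareyAdj (x y : OnePoint ℝ) : Prop :=
  ∃ a b c d : ℤ, x = intPt a b ∧ y = intPt c d ∧
    (a * d - b * c = 1 ∨ a * d - b * c = -1)

/-- `x` is an extended rational, i.e. a member of `ℚ∞ = ℚ ∪ {∞} ⊆ ℝ∞`. -/
def IsExtRat (x : OnePoint ℝ) : Prop :=
  x = ∞ ∨ ∃ q : ℚ, x = ((q : ℝ) : OnePoint ℝ)

-- One step of the index-tracking sequence, for the current coefficient sequence `c`.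
open Classical in
noncomputable def eStep (c : ℕ → ℤ) (e : ℕ) : Option ℕ :=
  if h : ∃ m, badIdx c m then
    let m := Nat.find h
    if c m = 0 then
      if e + 2 ≤ m then Option.some e
      else if e = m - 1 ∨ e = m then (none : Option ℕ)
      else Option.some (e - 2)
    else
      if e + 2 ≤ m then Option.some e
      else if e = m - 1 then (none : Option ℕ)
      else Option.some (e - 1)
  else Option.some e

/-- The index-tracking sequence `e⁽⁰⁾(k), e⁽¹⁾(k), …` (`none` once it has terminated). -/
noncomputable def eSeq (b : ℕ → ℤ) (k : ℕ) : ℕ → Option ℕ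
  | 0 => Option.some k
  | n + 1 => (eSeq b k n).bind (eStep (Phi^[n] b))

section FareyHelpers

open Set

lemma farey_symm {x y : OnePoint ℝ} (h : FareyAdj x y) : FareyAdj y x := by
  obtain ⟨a, b, c, d, hx, hy, hd⟩ := h
  refine ⟨c, d, a, b, hy, hx, ?_⟩
  rcases hd with h | h
  · exact Or.inr (by linear_combination -h)
  · exact Or.inl (by linear_combination -h)

lemma intPt_eq (a b : ℤ) (hb : b ≠ 0) :
    intPt a b = (((a : ℝ) / (b : ℝ)) : OnePoint ℝ) := by
  rw [intPt, if_neg hb]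

lemma not_mem_compIn {A U W : Set (OnePoint ℝ)} {a b : OnePoint ℝ}
    (hU : IsOpen U) (hW : IsOpen W) (hUW : U ∩ W = ∅)
    (hcov : A ⊆ U ∪ W) (ha : a ∈ U) (hb : b ∈ W) (haA : a ∈ A) :
    b ∉ connectedComponentIn A a := by
  intro hmem
  obtain ⟨z, hz⟩ :=
    isPreconnected_connectedComponentIn U W hU hW
      ((connectedComponentIn_subset A a).trans hcov)
      ⟨a, mem_connectedComponentIn haA, ha⟩ ⟨b, hmem, hb⟩
  have := hz.2
  rw [hUW] at this
  exact this

lemma sep_pair {u v : OnePoint ℝ} {U W : Set (OnePoint ℝ)}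
    (hU : IsOpen U) (hW : IsOpen W) (hUW : U ∩ W = ∅)
    (hcov : ({u, v}ᶜ : Set (OnePoint ℝ)) ⊆ U ∪ W)
    (hUc : U ⊆ ({u, v}ᶜ : Set (OnePoint ℝ))) (hWc : W ⊆ ({u, v}ᶜ : Set (OnePoint ℝ)))
    {α β : OnePoint ℝ} (hα : α ∈ U) (hβ : β ∈ W) :
    u ≠ α ∧ u ≠ β ∧ v ≠ α ∧ v ≠ β ∧
      α ∈ ({u, v}ᶜ : Set (OnePoint ℝ)) ∧ β ∈ ({u, v}ᶜ : Set (OnePoint ℝ)) ∧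
      β ∉ connectedComponentIn ({u, v}ᶜ : Set (OnePoint ℝ)) α ∧
      α ∉ connectedComponentIn ({u, v}ᶜ : Set (OnePoint ℝ)) β := by
  have hαc := hUc hα
  have hβc := hWc hβ
  have h1 : β ∉ connectedComponentIn ({u, v}ᶜ : Set (OnePoint ℝ)) α :=
    not_mem_compIn hU hW hUW hcov hα hβ hαc
  have hcov' : ({u, v}ᶜ : Set (OnePoint ℝ)) ⊆ W ∪ U := by
    rw [Set.union_comm]; exact hcov
  have h2 : α ∉ connectedComponentIn ({u, v}ᶜ : Set (OnePoint ℝ)) β :=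
    not_mem_compIn hW hU (by rw [Set.inter_comm]; exact hUW) hcov' hβ hα hβc
  have hα' : α ≠ u ∧ α ≠ v := by
    simpa [Set.mem_compl_iff, not_or] using hαc
  have hβ' : β ≠ u ∧ β ≠ v := by
    simpa [Set.mem_compl_iff, not_or] using hβc
  exact ⟨hα'.1.symm, hβ'.1.symm, hα'.2.symm, hβ'.2.symm, hαc, hβc, h1, h2⟩

lemma sep_finite (u v x : ℝ) (h1 : u < x) (h2 : x < v) (β : OnePoint ℝ)
    (hβ : β ∉ ((↑) '' Set.Icc u v : Set (OnePoint ℝ))) :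
    ((u : OnePoint ℝ)) ≠ (x : OnePoint ℝ) ∧ ((u : OnePoint ℝ)) ≠ β ∧
      ((v : OnePoint ℝ)) ≠ (x : OnePoint ℝ) ∧ ((v : OnePoint ℝ)) ≠ β ∧
      ((x : OnePoint ℝ)) ∈ ({(u : OnePoint ℝ), (v : OnePoint ℝ)}ᶜ : Set (OnePoint ℝ)) ∧
      β ∈ ({(u : OnePoint ℝ), (v : OnePoint ℝ)}ᶜ : Set (OnePoint ℝ)) ∧
      β ∉ connectedComponentIn ({(u : OnePoint ℝ), (v : OnePoint ℝ)}ᶜ : Set (OnePoint ℝ))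
        (x : OnePoint ℝ) ∧
      (x : OnePoint ℝ) ∉ connectedComponentIn
        ({(u : OnePoint ℝ), (v : OnePoint ℝ)}ᶜ : Set (OnePoint ℝ)) β := by
  have huv : u < v := h1.trans h2
  set U : Set (OnePoint ℝ) := (↑) '' Set.Ioo u v with hUdef
  set W : Set (OnePoint ℝ) := ((↑) '' Set.Icc u v)ᶜ with hWdef
  have hU : IsOpen U := OnePoint.isOpen_image_coe.2 isOpen_Ioo
  have hW : IsOpen W := OnePoint.isOpen_compl_image_coe.2 ⟨isClosed_Icc, isCompact_Icc⟩
  have hUW : U ∩ W = ∅ := by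
    apply Set.eq_empty_of_forall_notMem
    rintro z ⟨hz1, hz2⟩
    exact hz2 (Set.image_mono Set.Ioo_subset_Icc_self hz1)
  have hcov : ({(u : OnePoint ℝ), (v : OnePoint ℝ)}ᶜ : Set (OnePoint ℝ)) ⊆ U ∪ W := by
    intro z hz
    by_cases hzI : z ∈ ((↑) '' Set.Icc u v : Set (OnePoint ℝ))
    · obtain ⟨t, ht, rfl⟩ := hzI
      simp only [Set.mem_compl_iff, Set.mem_insert_iff, Set.mem_singleton_iff, not_or] at hz
      have htu : t ≠ u := fun h => hz.1 (by rw [h])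
      have htv : t ≠ v := fun h => hz.2 (by rw [h])
      exact Or.inl ⟨t, ⟨lt_of_le_of_ne ht.1 (Ne.symm htu), lt_of_le_of_ne ht.2 htv⟩, rfl⟩
    · exact Or.inr hzI
  have hUc : U ⊆ ({(u : OnePoint ℝ), (v : OnePoint ℝ)}ᶜ : Set (OnePoint ℝ)) := by
    rintro z ⟨t, ht, rfl⟩
    simp only [Set.mem_compl_iff, Set.mem_insert_iff, Set.mem_singleton_iff, not_or,
      OnePoint.coe_eq_coe]
    exact ⟨ne_of_gt ht.1, ne_of_lt ht.2⟩
  have hWc : W ⊆ ({(u : OnePoint ℝ), (v : OnePoint ℝ)}ᶜ : Set (OnePoint ℝ)) := by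
    intro z hz
    simp only [Set.mem_compl_iff, Set.mem_insert_iff, Set.mem_singleton_iff, not_or]
    constructor
    · rintro rfl; exact hz ⟨u, ⟨le_refl u, le_of_lt huv⟩, rfl⟩
    · rintro rfl; exact hz ⟨v, ⟨le_of_lt huv, le_refl v⟩, rfl⟩
  have hα : (x : OnePoint ℝ) ∈ U := ⟨x, ⟨h1, h2⟩, rfl⟩
  exact sep_pair hU hW hUW hcov hUc hWc hα hβ

lemma sep_inf (n x y : ℝ) (h1 : x < n) (h2 : n < y) :
    ((n : OnePoint ℝ)) ≠ (x : OnePoint ℝ) ∧ ((n : OnePoint ℝ)) ≠ (y : OnePoint ℝ) ∧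
      (∞ : OnePoint ℝ) ≠ (x : OnePoint ℝ) ∧ (∞ : OnePoint ℝ) ≠ (y : OnePoint ℝ) ∧
      ((x : OnePoint ℝ)) ∈ ({(n : OnePoint ℝ), ∞}ᶜ : Set (OnePoint ℝ)) ∧
      ((y : OnePoint ℝ)) ∈ ({(n : OnePoint ℝ), ∞}ᶜ : Set (OnePoint ℝ)) ∧
      (y : OnePoint ℝ) ∉ connectedComponentIn ({(n : OnePoint ℝ), ∞}ᶜ : Set (OnePoint ℝ))
        (x : OnePoint ℝ) ∧
      (x : OnePoint ℝ) ∉ connectedComponentIn ({(n : OnePoint ℝ), ∞}ᶜ : Set (OnePoint ℝ))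
        (y : OnePoint ℝ) := by
  set U : Set (OnePoint ℝ) := (↑) '' Set.Iio n with hUdef
  set W : Set (OnePoint ℝ) := (↑) '' Set.Ioi n with hWdef
  have hU : IsOpen U := OnePoint.isOpen_image_coe.2 isOpen_Iio
  have hW : IsOpen W := OnePoint.isOpen_image_coe.2 isOpen_Ioi
  have hUW : U ∩ W = ∅ := by
    apply Set.eq_empty_of_forall_notMem
    rintro z ⟨⟨t, ht, rfl⟩, ⟨s, hs, hst⟩⟩
    rw [OnePoint.coe_eq_coe] at hst
    subst hst
    exact lt_asymm ht (Set.mem_Ioi.1 hs)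
  have hcov : ({(n : OnePoint ℝ), ∞}ᶜ : Set (OnePoint ℝ)) ⊆ U ∪ W := by
    intro z hz
    simp only [Set.mem_compl_iff, Set.mem_insert_iff, Set.mem_singleton_iff, not_or] at hz
    obtain (rfl | ⟨t, rfl⟩) : z = ∞ ∨ ∃ t : ℝ, z = (t : OnePoint ℝ) := by
      cases z with
      | infty => exact Or.inl rfl
      | coe t => exact Or.inr ⟨t, rfl⟩
    · exact absurd rfl hz.2
    · have : t ≠ n := fun h => hz.1 (by rw [h])
      rcases lt_or_gt_of_ne this with h | h
      · exact Or.inl ⟨t, h, rfl⟩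
      · exact Or.inr ⟨t, h, rfl⟩
  have hUc : U ⊆ ({(n : OnePoint ℝ), ∞}ᶜ : Set (OnePoint ℝ)) := by
    rintro z ⟨t, ht, rfl⟩
    simp only [Set.mem_compl_iff, Set.mem_insert_iff, Set.mem_singleton_iff, not_or,
      OnePoint.coe_eq_coe]
    exact ⟨ne_of_lt ht, OnePoint.coe_ne_infty t⟩
  have hWc : W ⊆ ({(n : OnePoint ℝ), ∞}ᶜ : Set (OnePoint ℝ)) := by
    rintro z ⟨t, ht, rfl⟩
    simp only [Set.mem_compl_iff, Set.mem_insert_iff, Set.mem_singleton_iff, not_or,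
      OnePoint.coe_eq_coe]
    exact ⟨ne_of_gt ht, OnePoint.coe_ne_infty t⟩
  exact sep_pair hU hW hUW hcov hUc hWc ⟨x, h1, rfl⟩ ⟨y, h2, rfl⟩

lemma fareyAdj_int_inf (n : ℤ) : FareyAdj ((n : ℝ) : OnePoint ℝ) (∞ : OnePoint ℝ) := by
  refine ⟨n, 1, 1, 0, ?_, ?_, Or.inr (by ring)⟩
  · rw [intPt_eq n 1 one_ne_zero, OnePoint.coe_eq_coe]; norm_num
  · rw [intPt, if_pos rfl]

lemma fareyAdj_consec (n : ℤ) :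
    FareyAdj ((n : ℝ) : OnePoint ℝ) (((((n : ℝ) + 1) : ℝ)) : OnePoint ℝ) := by
  refine ⟨n, 1, n + 1, 1, ?_, ?_, Or.inr (by ring)⟩
  · rw [intPt_eq n 1 one_ne_zero, OnePoint.coe_eq_coe]; norm_num
  · rw [intPt_eq (n + 1) 1 one_ne_zero, OnePoint.coe_eq_coe]; push_cast; ring

end FareyHelpers

set_option maxHeartbeats 1000000 in
lemma key_lt (x y : ℝ) (hxy : x < y)
    (h : ¬ FareyAdj (x : OnePoint ℝ) (y : OnePoint ℝ)) :
    ∃ u v : OnePoint ℝ, FareyAdj u v ∧ u ≠ (x : OnePoint ℝ) ∧ u ≠ (y : OnePoint ℝ) ∧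
      v ≠ (x : OnePoint ℝ) ∧ v ≠ (y : OnePoint ℝ) ∧
      (x : OnePoint ℝ) ∈ ({u, v}ᶜ : Set (OnePoint ℝ)) ∧
      (y : OnePoint ℝ) ∈ ({u, v}ᶜ : Set (OnePoint ℝ)) ∧
      (y : OnePoint ℝ) ∉ connectedComponentIn ({u, v}ᶜ : Set (OnePoint ℝ)) (x : OnePoint ℝ) ∧
      (x : OnePoint ℝ) ∉ connectedComponentIn ({u, v}ᶜ : Set (OnePoint ℝ)) (y : OnePoint ℝ) := by
  classical
  by_cases hn : ∃ n : ℤ, x < (n : ℝ) ∧ (n : ℝ) < y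
  · obtain ⟨n, hn1, hn2⟩ := hn
    obtain ⟨a1, a2, a3, a4, a5, a6, a7, a8⟩ := sep_inf (n : ℝ) x y hn1 hn2
    exact ⟨((n : ℝ) : OnePoint ℝ), ∞, fareyAdj_int_inf n, a1, a2, a3, a4, a5, a6, a7, a8⟩
  push_neg at hn
  set P : ℕ → Prop := fun k => 0 < k ∧ ∃ p : ℤ, x < (p : ℝ) / (k : ℝ) ∧ (p : ℝ) / (k : ℝ) < y
    with hPdef
  have hQ : ∃ k, P k := by
    obtain ⟨z, hz1, hz2⟩ := exists_rat_btwn hxy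
    exact ⟨z.den, z.pos, z.num, by rwa [← Rat.cast_def], by rwa [← Rat.cast_def]⟩
  obtain ⟨hqpos, p, hp1, hp2⟩ := Nat.find_spec hQ
  set q : ℕ := Nat.find hQ with hqdef
  have hmin : ∀ k : ℕ, k < q → ¬ P k := fun k hk => Nat.find_min hQ hk
  have hqR : (0 : ℝ) < (q : ℝ) := by exact_mod_cast hqpos
  have hqZ : (0 : ℤ) < (q : ℤ) := by exact_mod_cast hqpos
  have hq2 : 2 ≤ q := by
    rcases Nat.lt_or_ge q 2 with hcon | hge
    · exfalso
      have hq1 : q = 1 := by omega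
      rw [hq1] at hp1 hp2
      have hp1' : x < (p : ℝ) := by simpa using hp1
      have hp2' : (p : ℝ) < y := by simpa using hp2
      exact absurd (hn p hp1') (not_le.2 hp2')
    · exact hge
  -- p and q are coprime
  have hcop : Int.gcd p (q : ℤ) = 1 := by
    by_contra hg
    set g : ℕ := Int.gcd p (q : ℤ) with hgdef
    have hgpos : 0 < g := Int.gcd_pos_of_ne_zero_right p (by exact_mod_cast hqpos.ne')
    have hg2 : 2 ≤ g := by omega
    have hdvdq : g ∣ q := by
      have : ((g : ℤ)) ∣ (q : ℤ) := Int.gcd_dvd_right p (q : ℤ)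
      exact_mod_cast this
    have hdvdp : ((g : ℤ)) ∣ p := Int.gcd_dvd_left p (q : ℤ)
    set q' : ℕ := q / g with hq'def
    set p' : ℤ := p / (g : ℤ) with hp'def
    have hq'pos : 0 < q' := Nat.div_pos (Nat.le_of_dvd hqpos hdvdq) hgpos
    have hq'lt : q' < q := Nat.div_lt_self hqpos hg2
    have hgR : ((g : ℝ)) ≠ 0 := by exact_mod_cast hgpos.ne'
    have e1 : (p : ℝ) = (p' : ℝ) * (g : ℝ) := by
      have h1 : p' * (g : ℤ) = p := Int.ediv_mul_cancel hdvdp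
      exact_mod_cast h1.symm
    have e2 : (q : ℝ) = (q' : ℝ) * (g : ℝ) := by
      have h1 : q' * g = q := Nat.div_mul_cancel hdvdq
      exact_mod_cast h1.symm
    have e3 : (p' : ℝ) / (q' : ℝ) = (p : ℝ) / (q : ℝ) := by
      rw [e1, e2, mul_div_mul_right _ _ hgR]
    exact hmin q' hq'lt ⟨hq'pos, p', by rw [e3]; exact hp1, by rw [e3]; exact hp2⟩
  have hbez : (1 : ℤ) = p * Int.gcdA p (q : ℤ) + (q : ℤ) * Int.gcdB p (q : ℤ) := by
    have := Int.gcd_eq_gcd_ab p (q : ℤ)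
    rw [hcop] at this
    exact_mod_cast this
  set b : ℤ := Int.gcdA p (q : ℤ) % (q : ℤ) with hbdef
  have hb0 : 0 ≤ b := Int.emod_nonneg _ hqZ.ne'
  have hblt : b < (q : ℤ) := Int.emod_lt_of_pos _ hqZ
  have key : p * b - 1 =
      (q : ℤ) * (-(Int.gcdB p (q : ℤ)) - p * (Int.gcdA p (q : ℤ) / (q : ℤ))) := by
    rw [hbdef, Int.emod_def]
    linear_combination -hbez
  have hdvd : (q : ℤ) ∣ p * b - 1 := ⟨_, key⟩
  have hbpos : 0 < b := by
    rcases hb0.eq_or_lt with hbz | hbz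
    · exfalso
      rw [← hbz] at hdvd
      simp only [mul_zero, zero_sub] at hdvd
      have : (q : ℤ) ∣ 1 := (dvd_neg).1 hdvd
      have := Int.le_of_dvd one_pos this
      omega
    · exact hbz
  set a : ℤ := (p * b - 1) / (q : ℤ) with hadef
  have ha : (q : ℤ) * a = p * b - 1 := by
    rw [hadef, mul_comm]
    exact Int.ediv_mul_cancel hdvd
  have hbR : (0 : ℝ) < (b : ℝ) := by exact_mod_cast hbpos
  have hbne : b ≠ 0 := hbpos.ne'
  have hqZne : (q : ℤ) ≠ 0 := hqZ.ne'
  have hab_lt : (a : ℝ) / (b : ℝ) < (p : ℝ) / (q : ℝ) := by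
    rw [div_lt_div_iff₀ hbR hqR]
    have : a * (q : ℤ) < p * b := by nlinarith [ha, mul_comm a (q : ℤ)]
    calc (a : ℝ) * (q : ℝ) = (((a * (q : ℤ)) : ℤ) : ℝ) := by push_cast; ring
    _ < (((p * b) : ℤ) : ℝ) := by exact_mod_cast this
    _ = (p : ℝ) * (b : ℝ) := by push_cast; ring
  have habx : (a : ℝ) / (b : ℝ) ≤ x := by
    by_contra hcon
    push_neg at hcon
    refine hmin b.toNat (by omega) ⟨by omega, a, ?_, ?_⟩
    · rwa [show ((b.toNat : ℕ) : ℝ) = (b : ℝ) by exact_mod_cast Int.toNat_of_nonneg hb0]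
    · rw [show ((b.toNat : ℕ) : ℝ) = (b : ℝ) by exact_mod_cast Int.toNat_of_nonneg hb0]
      exact hab_lt.trans hp2
  rcases habx.eq_or_lt with hxe | hxlt
  · -- a/b = x; use the other parent c/d
    set d : ℤ := (q : ℤ) - b with hddef
    set c : ℤ := p - a with hcdef
    have hdpos : 0 < d := by omega
    have hdlt : d < (q : ℤ) := by omega
    have hcd : (q : ℤ) * c = p * d + 1 := by rw [hcdef, hddef]; linear_combination -ha
    have hdR : (0 : ℝ) < (d : ℝ) := by exact_mod_cast hdpos
    have hpq_cd : (p : ℝ) / (q : ℝ) < (c : ℝ) / (d : ℝ) := by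
      rw [div_lt_div_iff₀ hqR hdR]
      have : p * d < c * (q : ℤ) := by nlinarith [hcd, mul_comm c (q : ℤ)]
      calc (p : ℝ) * (d : ℝ) = (((p * d) : ℤ) : ℝ) := by push_cast; ring
      _ < (((c * (q : ℤ)) : ℤ) : ℝ) := by exact_mod_cast this
      _ = (c : ℝ) * (q : ℝ) := by push_cast; ring
    have hycd : y ≤ (c : ℝ) / (d : ℝ) := by
      by_contra hcon
      push_neg at hcon
      refine hmin d.toNat (by omega) ⟨by omega, c, ?_, ?_⟩
      · rw [show ((d.toNat : ℕ) : ℝ) = (d : ℝ) by exact_mod_cast Int.toNat_of_nonneg hdpos.le]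
        calc x = (a : ℝ) / (b : ℝ) := hxe.symm
        _ < (p : ℝ) / (q : ℝ) := hab_lt
        _ < (c : ℝ) / (d : ℝ) := hpq_cd
      · rwa [show ((d.toNat : ℕ) : ℝ) = (d : ℝ) by exact_mod_cast Int.toNat_of_nonneg hdpos.le]
    rcases hycd.eq_or_lt with hye | hylt
    · -- x = a/b and y = c/d are Farey adjacent: contradiction
      exfalso
      apply h
      refine ⟨a, b, c, d, ?_, ?_, Or.inr (by rw [hcdef, hddef]; linear_combination ha)⟩
      · rw [intPt_eq a b hbne, hxe]
      · rw [intPt_eq c d hdpos.ne', ← hye]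
    · -- edge {p/q, c/d} separates: y inside, x outside
      obtain ⟨a1, a2, a3, a4, a5, a6, a7, a8⟩ :=
        sep_finite ((p : ℝ) / ((q : ℤ) : ℝ)) ((c : ℝ) / (d : ℝ)) y
          (by rwa [Int.cast_natCast q]) hylt (x : OnePoint ℝ)
          (by
            rintro ⟨t, ht, htx⟩
            rw [OnePoint.coe_eq_coe] at htx
            subst htx
            have : (p : ℝ) / (q : ℝ) ≤ t := by
              have := ht.1
              rwa [Int.cast_natCast q] at this
            linarith [hab_lt, hxe.le])
      refine ⟨(((p : ℝ) / ((q : ℤ) : ℝ)) : OnePoint ℝ), (((c : ℝ) / ((d : ℤ) : ℝ)) : OnePoint ℝ),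
        ?_, a2, a1, a4, a3, a6, a5, a8, a7⟩
      exact ⟨p, (q : ℤ), c, d, (intPt_eq p (q : ℤ) hqZne).symm, (intPt_eq c d hdpos.ne').symm,
        Or.inr (by rw [hcdef, hddef]; linear_combination ha)⟩
  · -- a/b < x: edge {a/b, p/q} separates: x inside, y outside
    obtain ⟨a1, a2, a3, a4, a5, a6, a7, a8⟩ :=
      sep_finite ((a : ℝ) / (b : ℝ)) ((p : ℝ) / ((q : ℤ) : ℝ)) x hxlt
        (by rwa [Int.cast_natCast q]) (y : OnePoint ℝ)
        (by
          rintro ⟨t, ht, hty⟩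
          rw [OnePoint.coe_eq_coe] at hty
          subst hty
          have : t ≤ (p : ℝ) / (q : ℝ) := by
            have := ht.2
            rwa [Int.cast_natCast q] at this
          linarith)
    refine ⟨(((a : ℝ) / ((b : ℤ) : ℝ)) : OnePoint ℝ), (((p : ℝ) / ((q : ℤ) : ℝ)) : OnePoint ℝ),
      ?_, a1, a2, a3, a4, a5, a6, a7, a8⟩
    exact ⟨a, b, p, (q : ℤ), (intPt_eq a b hbne).symm, (intPt_eq p (q : ℤ) hqZne).symm,
      Or.inr (by linear_combination ha)⟩

set_option maxHeartbeats 1000000 in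
lemma key_inf (y : ℝ) (h : ¬ FareyAdj (∞ : OnePoint ℝ) (y : OnePoint ℝ)) :
    ∃ u v : OnePoint ℝ, FareyAdj u v ∧ u ≠ (∞ : OnePoint ℝ) ∧ u ≠ (y : OnePoint ℝ) ∧
      v ≠ (∞ : OnePoint ℝ) ∧ v ≠ (y : OnePoint ℝ) ∧
      (∞ : OnePoint ℝ) ∈ ({u, v}ᶜ : Set (OnePoint ℝ)) ∧
      (y : OnePoint ℝ) ∈ ({u, v}ᶜ : Set (OnePoint ℝ)) ∧
      (y : OnePoint ℝ) ∉ connectedComponentIn ({u, v}ᶜ : Set (OnePoint ℝ)) (∞ : OnePoint ℝ) ∧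
      (∞ : OnePoint ℝ) ∉ connectedComponentIn ({u, v}ᶜ : Set (OnePoint ℝ)) (y : OnePoint ℝ) := by
  have hnotint : ∀ n : ℤ, (n : ℝ) ≠ y := by
    intro n hny
    exact h (hny ▸ farey_symm (fareyAdj_int_inf n))
  have hn1 : ((⌊y⌋ : ℤ) : ℝ) < y := lt_of_le_of_ne (Int.floor_le y) (hnotint ⌊y⌋)
  have hn2 : y < ((⌊y⌋ : ℤ) : ℝ) + 1 := Int.lt_floor_add_one y
  obtain ⟨a1, a2, a3, a4, a5, a6, a7, a8⟩ :=
    sep_finite ((⌊y⌋ : ℤ) : ℝ) (((⌊y⌋ : ℤ) : ℝ) + 1) y hn1 hn2 (∞ : OnePoint ℝ)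
      (by rintro ⟨t, -, ht⟩; exact OnePoint.coe_ne_infty t ht)
  exact ⟨(((⌊y⌋ : ℤ) : ℝ) : OnePoint ℝ), ((((((⌊y⌋ : ℤ) : ℝ) + 1) : ℝ)) : OnePoint ℝ),
    fareyAdj_consec ⌊y⌋, a2, a1, a4, a3, a6, a5, a8, a7⟩

/-- **Lemma 2.** If `α, β ∈ ℝ∞` are distinct and not a pair of adjacent vertices of the
Farey graph, then there is an edge `{u, v}` of the Farey graph, avoiding `α` and `β`,
that separates `α` from `β` on the circle `ℝ∞`. -/
theorem stmt8 (α β : OnePoint ℝ) (hne : α ≠ β) (hnadj : ¬ FareyAdj α β) :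
    ∃ u v : OnePoint ℝ, FareyAdj u v ∧ u ≠ α ∧ u ≠ β ∧ v ≠ α ∧ v ≠ β ∧
      α ∈ ({u, v}ᶜ : Set (OnePoint ℝ)) ∧ β ∈ ({u, v}ᶜ : Set (OnePoint ℝ)) ∧
      β ∉ connectedComponentIn ({u, v}ᶜ : Set (OnePoint ℝ)) α := by
  cases α with
  | infty =>
    cases β with
    | infty => exact absurd rfl hne
    | coe y =>
      obtain ⟨u, v, h1, h2, h3, h4, h5, h6, h7, h8, h9⟩ := key_inf y hnadj
      exact ⟨u, v, h1, h2, h3, h4, h5, h6, h7, h8⟩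
  | coe x =>
    cases β with
    | infty =>
      obtain ⟨u, v, h1, h2, h3, h4, h5, h6, h7, h8, h9⟩ :=
        key_inf x (fun hc => hnadj (farey_symm hc))
      exact ⟨u, v, h1, h3, h2, h5, h4, h7, h6, h9⟩
    | coe y =>
      rcases lt_trichotomy x y with hlt | heq | hgt
      · obtain ⟨u, v, h1, h2, h3, h4, h5, h6, h7, h8, h9⟩ := key_lt x y hlt hnadj
        exact ⟨u, v, h1, h2, h3, h4, h5, h6, h7, h8⟩
      · exact absurd (by rw [heq]) hne
      · obtain ⟨u, v, h1, h2, h3, h4, h5, h6, h7, h8, h9⟩ :=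
          key_lt y x hgt (fun hc => hnadj (farey_symm hc))
        exact ⟨u, v, h1, h3, h2, h5, h4, h7, h6, h9⟩
end

section
/- Let (b₀,b₁,…) be a sequence of integers with |b_n| ≥ 2 for all n ≥ 1. Then the continued fraction [b₀,b₁,…] converges to a real number α with b₀ − 1 ≤ α ≤ b₀ + 1. Moreover α = b₀ − 1 if and only if b_n = 2 for all n ≥ 1, and α = b₀ + 1 if and only if b_n = −2 for all n ≥ 1. -/
open Filter Topology OnePoint

-- auxiliary
def nd : List ℤ → ℤ × ℤ
  | [] => (1, 0)
  | c :: t => (c * (nd t).1 - (nd t).2, (nd t).1)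

lemma nd_ne_zero (l : List ℤ) : ¬((nd l).1 = 0 ∧ (nd l).2 = 0) := by
  induction l with
  | nil => simp [nd]
  | cons c t ih =>
    rintro ⟨h1, h2⟩
    simp only [nd] at h1 h2
    exact ih ⟨h2, by rw [h2] at h1; linarith⟩

lemma mob_coe (b : ℤ) (x : ℝ) : mob b ((x : ℝ) : OnePoint ℝ)
    = if x = 0 then (∞ : OnePoint ℝ) else (((b : ℝ) - 1 / x : ℝ) : OnePoint ℝ) := rfl

lemma cfVal_eq (l : List ℤ) : cfVal l = intPt (nd l).1 (nd l).2 := by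
  induction l with
  | nil => simp [cfVal, nd, intPt]
  | cons c t ih =>
    have hnz := nd_ne_zero t
    simp only [cfVal, ih, nd]
    by_cases hy : (nd t).2 = 0
    · have hx : (nd t).1 ≠ 0 := fun h => hnz ⟨h, hy⟩
      have hxr : ((nd t).1 : ℝ) ≠ 0 := Int.cast_ne_zero.mpr hx
      simp only [intPt, hy, if_pos rfl, if_neg hx]
      show ((c : ℝ) : OnePoint ℝ) = _
      congr 1
      field_simp
      simp
    · have hyr : ((nd t).2 : ℝ) ≠ 0 := Int.cast_ne_zero.mpr hy
      simp only [intPt, if_neg hy, mob_coe]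
      by_cases hx : (nd t).1 = 0
      · have : ((nd t).1 : ℝ) / ((nd t).2 : ℝ) = 0 := by
          rw [hx]; simp
        rw [this, if_pos rfl, if_pos]
        rw [hx]
      · have hxr : ((nd t).1 : ℝ) ≠ 0 := Int.cast_ne_zero.mpr hx
        have hne : ((nd t).1 : ℝ) / ((nd t).2 : ℝ) ≠ 0 := div_ne_zero hxr hyr
        rw [if_neg hne, if_neg hx]
        congr 1
        push_cast
        field_simp

lemma nd_append2 (l : List ℤ) (c d : ℤ) :
    nd (l ++ [c, d]) = (d * (nd (l ++ [c])).1 - (nd l).1, d * (nd (l ++ [c])).2 - (nd l).2) := by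
  induction l with
  | nil =>
    show nd [c, d] = _
    simp only [nd, List.nil_append, Prod.mk.injEq, and_true]
    ring
  | cons a t ih =>
    have h1 : nd ((a :: t) ++ [c, d])
        = (a * (nd (t ++ [c, d])).1 - (nd (t ++ [c, d])).2, (nd (t ++ [c, d])).1) := rfl
    have h2 : nd ((a :: t) ++ [c])
        = (a * (nd (t ++ [c])).1 - (nd (t ++ [c])).2, (nd (t ++ [c])).1) := rfl
    have h3 : nd (a :: t) = (a * (nd t).1 - (nd t).2, (nd t).1) := rfl
    rw [h1, h2, h3, ih]
    simp only [Prod.mk.injEq, and_true]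
    ring

noncomputable def Pc (b : ℕ → ℤ) (n : ℕ) : ℤ := (nd ((List.range (n+1)).map b)).1
noncomputable def Qc (b : ℕ → ℤ) (n : ℕ) : ℤ := (nd ((List.range (n+1)).map b)).2

lemma list_succ (b : ℕ → ℤ) (n : ℕ) :
    (List.range (n+2)).map b = (List.range (n+1)).map b ++ [b (n+1)] := by
  rw [List.range_succ, List.map_append]; rfl

lemma Pc_zero (b : ℕ → ℤ) : Pc b 0 = b 0 := by simp [Pc, nd, List.range_succ, List.range_zero]
lemma Qc_zero (b : ℕ → ℤ) : Qc b 0 = 1 := by simp [Qc, nd, List.range_succ, List.range_zero]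
lemma Pc_one (b : ℕ → ℤ) : Pc b 1 = b 0 * b 1 - 1 := by
  show (nd ((List.range 2).map b)).1 = _
  rw [list_succ b 0]
  simp [nd, List.range_succ, List.range_zero]
lemma Qc_one (b : ℕ → ℤ) : Qc b 1 = b 1 := by
  show (nd ((List.range 2).map b)).2 = _
  rw [list_succ b 0]
  simp [nd, List.range_succ, List.range_zero]

lemma list_succ2 (b : ℕ → ℤ) (n : ℕ) :
    (List.range (n+3)).map b = (List.range (n+1)).map b ++ [b (n+1), b (n+2)] := by
  rw [list_succ b (n+1), list_succ b n, List.append_assoc]; rfl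

lemma Pc_rec (b : ℕ → ℤ) (n : ℕ) : Pc b (n+2) = b (n+2) * Pc b (n+1) - Pc b n := by
  show (nd ((List.range (n+3)).map b)).1 = _
  rw [list_succ2 b n, nd_append2, ← list_succ b n]; rfl
lemma Qc_rec (b : ℕ → ℤ) (n : ℕ) : Qc b (n+2) = b (n+2) * Qc b (n+1) - Qc b n := by
  show (nd ((List.range (n+3)).map b)).2 = _
  rw [list_succ2 b n, nd_append2, ← list_succ b n]; rfl

lemma det_c (b : ℕ → ℤ) : ∀ n, Pc b (n+1) * Qc b n - Pc b n * Qc b (n+1) = -1 := by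
  intro n
  induction n with
  | zero => rw [Pc_zero, Qc_zero, Pc_one, Qc_one]; ring
  | succ m ih => rw [Pc_rec, Qc_rec]; linear_combination ih

lemma Qc_growth (b : ℕ → ℤ) (hb : ∀ n : ℕ, 1 ≤ n → 2 ≤ |b n|) :
    ∀ n : ℕ, ((n : ℤ) + 1 ≤ |Qc b n|) ∧ (|Qc b n| + 1 ≤ |Qc b (n+1)|) := by
  intro n
  induction n with
  | zero =>
    rw [Qc_zero, Qc_one]
    constructor
    · simp
    · have := hb 1 le_rfl; simp; linarith
  | succ m ih =>
    obtain ⟨h1, h2⟩ := ih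
    refine ⟨by push_cast; linarith, ?_⟩
    rw [Qc_rec]
    have hb2 : 2 ≤ |b (m+2)| := hb (m+2) (by omega)
    have habs : |b (m+2) * Qc b (m+1)| - |Qc b m| ≤ |b (m+2) * Qc b (m+1) - Qc b m| :=
      abs_sub_abs_le_abs_sub _ _
    rw [abs_mul] at habs
    nlinarith [abs_nonneg (Qc b (m+1)), abs_nonneg (Qc b m)]

lemma cfConv_eq (b : ℕ → ℤ) (n : ℕ) : cfConv b n = intPt (Pc b n) (Qc b n) :=
  cfVal_eq _

/-- **Lemma 3.** If `|bₙ| ≥ 2` for all `n ≥ 1`, then `[b₀, b₁, …]` converges to a value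
`α ∈ [b₀ - 1, b₀ + 1]`; moreover `α = b₀ - 1` iff all `bₙ = 2`, and `α = b₀ + 1` iff
all `bₙ = -2` (for `n ≥ 1`). -/
theorem stmt9 (b : ℕ → ℤ) (hb : ∀ n : ℕ, 1 ≤ n → 2 ≤ |b n|) :
    ∃ α : ℝ, Filter.Tendsto (cfConv b) Filter.atTop (nhds ((α : OnePoint ℝ))) ∧
      (b 0 : ℝ) - 1 ≤ α ∧ α ≤ (b 0 : ℝ) + 1 ∧
      (α = (b 0 : ℝ) - 1 ↔ ∀ n : ℕ, 1 ≤ n → b n = 2) ∧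
      (α = (b 0 : ℝ) + 1 ↔ ∀ n : ℕ, 1 ≤ n → b n = -2) := by
  set P : ℕ → ℤ := fun n => Pc b n with hP
  set Q : ℕ → ℤ := fun n => Qc b n with hQ
  have hg : ∀ n : ℕ, ((n : ℤ) + 1 ≤ |Q n|) ∧ (|Q n| + 1 ≤ |Q (n+1)|) := Qc_growth b hb
  have hQpos : ∀ n, (0 : ℤ) < |Q n| := fun n => lt_of_lt_of_le (by positivity) (hg n).1
  have hQne : ∀ n, (Q n : ℝ) ≠ 0 := fun n => by
    have := hQpos n
    simp only [Int.cast_ne_zero]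
    intro h; rw [h] at this; simp at this
  -- the series terms
  set u : ℕ → ℝ := fun k => 1 / ((Q (k+1) : ℝ) * (Q k : ℝ)) with hu
  set g : ℕ → ℝ := fun k => 1 / (((k : ℝ) + 1) * ((k : ℝ) + 2)) with hgdef
  have hgpos : ∀ k : ℕ, (0:ℝ) < ((k : ℝ) + 1) * ((k : ℝ) + 2) := fun k => by positivity
  have hg0 : ∀ k : ℕ, 0 ≤ g k := fun k => by
    have := hgpos k; simp only [hgdef]; positivity
  have hgsum_partial : ∀ n : ℕ, ∑ i ∈ Finset.range n, g i = 1 - 1 / ((n : ℝ) + 1) := by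
    intro n
    induction n with
    | zero => simp
    | succ m ih =>
      rw [Finset.sum_range_succ, ih]
      simp only [hgdef]
      have h1 : ((m : ℝ) + 1) ≠ 0 := by positivity
      have h2 : ((m : ℝ) + 2) ≠ 0 := by positivity
      push_cast
      field_simp
      ring
  have hgsummable : Summable g := by
    apply summable_of_sum_range_le (c := 1) hg0
    intro n
    rw [hgsum_partial n]
    have : (0:ℝ) < (n : ℝ) + 1 := by positivity
    have : 0 ≤ 1 / ((n:ℝ)+1) := by positivity
    linarith
  have hghs : HasSum g 1 := by
    rw [hgsummable.hasSum_iff_tendsto_nat]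
    have h1 : Filter.Tendsto (fun n : ℕ => 1 - 1 / ((n : ℝ) + 1)) Filter.atTop (nhds (1 - 0)) :=
      Filter.Tendsto.const_sub _ tendsto_one_div_add_atTop_nhds_zero_nat
    rw [sub_zero] at h1
    exact h1.congr (fun n => (hgsum_partial n).symm)
  -- |QQ| lower bound, cast to ℝ
  have hQQ : ∀ k : ℕ, ((k : ℝ) + 1) * ((k : ℝ) + 2) ≤ |(Q (k+1) : ℝ) * (Q k : ℝ)| := by
    intro k
    have h1 := (hg k).1
    have h2 : ((k:ℤ) + 2) ≤ |Q (k+1)| := by have := (hg k).2; linarith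
    have : ((k:ℤ)+1) * ((k:ℤ)+2) ≤ |Q (k+1) * Q k| := by
      rw [abs_mul]
      have := hQpos k
      have := hQpos (k+1)
      nlinarith
    calc ((k : ℝ) + 1) * ((k : ℝ) + 2) = (((((k:ℤ)+1) * ((k:ℤ)+2)) : ℤ) : ℝ) := by push_cast; ring
      _ ≤ ((|Q (k+1) * Q k| : ℤ) : ℝ) := by exact_mod_cast this
      _ = |(Q (k+1) : ℝ) * (Q k : ℝ)| := by push_cast; rw [abs_mul]
  have habs_le : ∀ k : ℕ, |u k| ≤ g k := by
    intro k
    simp only [hu, hgdef, abs_div, abs_one]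
    rw [div_le_div_iff₀ (by have := hQQ k; have := hgpos k; linarith) (hgpos k)]
    have := hQQ k
    nlinarith [hQQ k]
  have hu_le : ∀ k : ℕ, u k ≤ g k := fun k => (le_abs_self _).trans (habs_le k)
  have hneg_le : ∀ k : ℕ, -g k ≤ u k := fun k => by
    have := (abs_le.mp (habs_le k)).1; linarith
  have husummable : Summable u :=
    Summable.of_abs (Summable.of_nonneg_of_le (fun k => abs_nonneg _) habs_le hgsummable)
  set T : ℝ := ∑' k, u k with hT
  have hT_le : T ≤ 1 := by
    calc T ≤ ∑' k, g k := Summable.tsum_le_tsum hu_le husummable hgsummable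
      _ = 1 := hghs.tsum_eq
  have hT_ge : -1 ≤ T := by
    have : ∑' k, (-g k) ≤ T := Summable.tsum_le_tsum hneg_le (hgsummable.neg) husummable
    rwa [tsum_neg, hghs.tsum_eq] at this
  set α : ℝ := (b 0 : ℝ) - T with hα
  -- convergents as reals
  set w : ℕ → ℝ := fun n => (P n : ℝ) / (Q n : ℝ) with hw
  have hdet : ∀ n : ℕ, (P (n+1) : ℝ) * (Q n : ℝ) - (P n : ℝ) * (Q (n+1) : ℝ) = -1 := by
    intro n
    exact_mod_cast congrArg (fun z : ℤ => (z : ℝ)) (det_c b n)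
  have hwS : ∀ n : ℕ, w n = (b 0 : ℝ) - ∑ i ∈ Finset.range n, u i := by
    intro n
    induction n with
    | zero =>
      simp only [hw, hP, hQ, Pc_zero, Qc_zero, Finset.range_zero, Finset.sum_empty]
      simp
    | succ m ih =>
      rw [Finset.sum_range_succ]
      have key : w (m+1) = w m - u m := by
        simp only [hw, hu]
        have h1 := hQne m
        have h2 := hQne (m+1)
        field_simp
        linear_combination hdet m
      rw [key, ih]
      ring
  have hStend : Filter.Tendsto (fun n => ∑ i ∈ Finset.range n, u i) Filter.atTop (nhds T) :=
    husummable.hasSum.tendsto_sum_nat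
  have hwtend : Filter.Tendsto w Filter.atTop (nhds α) := by
    rw [Filter.tendsto_congr hwS]
    exact Filter.Tendsto.const_sub _ hStend
  refine ⟨α, ?_, by linarith, by linarith, ?_, ?_⟩
  · have hconv : ∀ n : ℕ, cfConv b n = ((w n : ℝ) : OnePoint ℝ) := by
      intro n
      rw [cfConv_eq b n]
      have hqz : Q n ≠ 0 := by
        intro h; have := hQne n; rw [h] at this; simp at this
      simp only [intPt]
      exact if_neg (show Qc b n ≠ 0 from hqz)
    rw [Filter.tendsto_congr hconv]
    exact (OnePoint.continuous_coe.tendsto α).comp hwtend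
  · -- α = b0 - 1 ↔ all b = 2
    constructor
    · intro h
      have hT1 : T = 1 := by simp only [hα] at h; linarith
      have hQQeq : ∀ k : ℕ, Q (k+1) * Q k = ((k:ℤ)+1) * ((k:ℤ)+2) := by
        intro k
        by_contra hne
        have hlt : u k < g k := by
          rcases lt_or_eq_of_le (hu_le k) with h' | h'
          · exact h'
          · exfalso
            apply hne
            have hQQr : (Q (k+1) : ℝ) * (Q k : ℝ) = ((k:ℝ)+1) * ((k:ℝ)+2) := by
              have hx : (Q (k+1) : ℝ) * (Q k : ℝ) ≠ 0 := mul_ne_zero (hQne (k+1)) (hQne k)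
              have hy : ((k:ℝ)+1) * ((k:ℝ)+2) ≠ 0 := ne_of_gt (hgpos k)
              have := h'
              simp only [hu, hgdef] at this
              rw [div_eq_div_iff hx hy] at this
              linarith [this]
            exact_mod_cast (by push_cast; linarith [hQQr] : ((Q (k+1) * Q k : ℤ) : ℝ) = ((((k:ℤ)+1) * ((k:ℤ)+2) : ℤ) : ℝ))
        have : T < 1 := by
          calc T < ∑' k, g k := Summable.tsum_lt_tsum hu_le hlt husummable hgsummable
            _ = 1 := hghs.tsum_eq
        linarith
      -- deduce Q n = n + 1
      have hQval : ∀ n : ℕ, Q n = (n : ℤ) + 1 := by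
        intro n
        induction n with
        | zero => simp [hQ, Qc_zero]
        | succ m ih =>
          have := hQQeq m
          rw [ih] at this
          have hm : ((m:ℤ)+1) ≠ 0 := by positivity
          have : Q (m+1) * ((m:ℤ)+1) = ((m:ℤ)+2) * ((m:ℤ)+1) := by linarith [this]
          have := mul_right_cancel₀ hm this
          push_cast
          linarith
      intro n hn
      match n, hn with
      | 1, _ =>
        have := hQval 1
        rw [hQ] at this
        simp only [Qc_one] at this
        exact_mod_cast by push_cast at this ⊢; linarith
      | (m+2), _ =>
        have hrec : Q (m+2) = b (m+2) * Q (m+1) - Q m := Qc_rec b m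
        rw [hQval (m+2), hQval (m+1), hQval m] at hrec
        have hm : ((m:ℤ)+2) ≠ 0 := by positivity
        have : b (m+2) * ((m:ℤ)+2) = 2 * ((m:ℤ)+2) := by push_cast at hrec ⊢; linarith
        exact mul_right_cancel₀ hm this
    · intro hball
      have hQval : ∀ n : ℕ, Q n = (n : ℤ) + 1 ∧ Q (n+1) = (n : ℤ) + 2 := by
        intro n
        induction n with
        | zero =>
          constructor
          · simp [hQ, Qc_zero]
          · have h1 : Q 1 = b 1 := Qc_one b
            rw [hball 1 le_rfl] at h1
            simpa using h1
        | succ m ih =>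
          refine ⟨by push_cast; linarith [ih.2], ?_⟩
          have hrec : Q (m+2) = b (m+2) * Q (m+1) - Q m := Qc_rec b m
          rw [ih.1, ih.2, hball (m+2) (by omega)] at hrec
          push_cast at hrec ⊢
          linarith
      have hueq : ∀ k : ℕ, u k = g k := by
        intro k
        simp only [hu, hgdef]
        rw [(hQval (k+1)).1, (hQval k).1]
        push_cast
        ring_nf
      have : T = 1 := by
        rw [hT, tsum_congr hueq, hghs.tsum_eq]
      rw [hα, this]
  · -- α = b0 + 1 ↔ all b = -2
    constructor
    · intro h
      have hT1 : T = -1 := by simp only [hα] at h; linarith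
      have hQQeq : ∀ k : ℕ, Q (k+1) * Q k = -(((k:ℤ)+1) * ((k:ℤ)+2)) := by
        intro k
        by_contra hne
        have hlt : -g k < u k := by
          rcases lt_or_eq_of_le (hneg_le k) with h' | h'
          · exact h'
          · exfalso
            apply hne
            have hx : (Q (k+1) : ℝ) * (Q k : ℝ) ≠ 0 := mul_ne_zero (hQne (k+1)) (hQne k)
            have hm : (((k:ℝ)+1) * ((k:ℝ)+2)) ≠ 0 := ne_of_gt (hgpos k)
            have h'' := h'.symm
            simp only [hu, hgdef] at h''
            have hQQr : (Q (k+1) : ℝ) * (Q k : ℝ) = -(((k:ℝ)+1) * ((k:ℝ)+2)) := by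
              field_simp at h''
              rw [div_eq_iff hx] at h''
              linarith
            exact_mod_cast (by push_cast; linarith :
              ((Q (k+1) * Q k : ℤ) : ℝ) = ((-(((k:ℤ)+1) * ((k:ℤ)+2)) : ℤ) : ℝ))
        have : -1 < T := by
          have h1 : ∑' k, (-g k) < ∑' k, u k :=
            Summable.tsum_lt_tsum hneg_le hlt hgsummable.neg husummable
          rwa [tsum_neg, hghs.tsum_eq, ← hT] at h1
        linarith
      have hQval : ∀ n : ℕ, Q n = (-1)^n * ((n:ℤ)+1) := by
        intro n
        induction n with
        | zero => simp [hQ, Qc_zero]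
        | succ m ih =>
          have hq := hQQeq m
          rw [ih] at hq
          have hm : (-1:ℤ)^m * ((m:ℤ)+1) ≠ 0 := by
            apply mul_ne_zero (pow_ne_zero _ (by norm_num))
            positivity
          have hprod : ((-1:ℤ))^(m+1) * (-1)^m = -1 := by
            rw [← pow_add]; exact Odd.neg_one_pow ⟨m, by omega⟩
          have heq : Q (m+1) * ((-1:ℤ)^m * ((m:ℤ)+1))
              = ((-1)^(m+1) * ((m:ℤ)+2)) * ((-1)^m * ((m:ℤ)+1)) := by
            rw [hq]
            linear_combination (-(((m:ℤ)+1)*((m:ℤ)+2))) * hprod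
          have h5 := mul_right_cancel₀ hm heq
          rw [h5]; push_cast; ring
      intro n hn
      match n, hn with
      | 1, _ =>
        have h1 : Q 1 = b 1 := Qc_one b
        have h2 := hQval 1
        norm_num at h2
        rw [h1] at h2
        exact h2
      | (m+2), _ =>
        have hrec : Q (m+2) = b (m+2) * Q (m+1) - Q m := Qc_rec b m
        rw [hQval (m+2), hQval (m+1), hQval m] at hrec
        have hne : ((-1:ℤ)^m) ≠ 0 := pow_ne_zero _ (by norm_num)
        have h2 : (-1:ℤ)^(m+2) = (-1)^m := by rw [pow_succ, pow_succ]; ring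
        have h3 : (-1:ℤ)^(m+1) = -(-1)^m := by rw [pow_succ]; ring
        rw [h2, h3] at hrec
        push_cast at hrec
        have h4 : (-1:ℤ)^m * (((m:ℤ)+3) + b (m+2)*((m:ℤ)+2) + ((m:ℤ)+1)) = 0 := by
          linear_combination hrec
        have h5 := (mul_eq_zero.mp h4).resolve_left hne
        have h6 : b (m+2) * ((m:ℤ)+2) = -2 * ((m:ℤ)+2) := by linarith
        exact mul_right_cancel₀ (by positivity : ((m:ℤ)+2) ≠ 0) h6
    · intro hball
      have hQval : ∀ n : ℕ, Q n = (-1)^n * ((n:ℤ)+1) ∧ Q (n+1) = (-1)^(n+1) * ((n:ℤ)+2) := by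
        intro n
        induction n with
        | zero =>
          refine ⟨by simp [hQ, Qc_zero], ?_⟩
          have h1 : Q 1 = b 1 := Qc_one b
          rw [hball 1 le_rfl] at h1
          rw [h1]; norm_num
        | succ m ih =>
          refine ⟨by rw [ih.2]; push_cast; ring, ?_⟩
          have hrec : Q (m+2) = b (m+2) * Q (m+1) - Q m := Qc_rec b m
          rw [ih.1, ih.2, hball (m+2) (by omega)] at hrec
          rw [hrec, pow_succ, pow_succ]
          push_cast
          ring
      have hueq : ∀ k : ℕ, u k = -g k := by
        intro k
        have hprod : ((-1:ℝ))^(k+1) * (-1)^k = -1 := by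
          rw [← pow_add]; exact Odd.neg_one_pow ⟨k, by omega⟩
        have hQ1 : (Q (k+1) : ℝ) = (-1)^(k+1) * ((k:ℝ)+2) := by
          rw [(hQval k).2]; push_cast; ring
        have hQ0 : (Q k : ℝ) = (-1)^k * ((k:ℝ)+1) := by
          rw [(hQval k).1]; push_cast; ring
        simp only [hu, hgdef]
        rw [hQ1, hQ0]
        have hd : ((-1:ℝ)^(k+1) * ((k:ℝ)+2)) * ((-1)^k * ((k:ℝ)+1))
            = -(((k:ℝ)+1) * ((k:ℝ)+2)) := by
          linear_combination (((k:ℝ)+1)*((k:ℝ)+2)) * hprod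
        rw [hd, div_neg]
      have hTm : T = -1 := by
        rw [hT, tsum_congr hueq, tsum_neg, hghs.tsum_eq]
      rw [hα, hTm]; ring
end
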